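/- Let X be a complete length space, x ∈ X, k > 1 and L > 0, and suppose that for every r > L the natural inclusion-induced map G(x, r, kr) → π₁(X, x) is an isomorphism. For α > 0 let X_α denote the metric space (X, d_X/α) and let G^{α} denote the corresponding relative δ-groups computed in X_α. Then for any r' > 0 and δ > 0 there exists A > 0 such that for all α ≥ A the group G^{α}(x, r', (k+1)r', δ) is trivial. -/

import Mathlib

open Metric unitInterval CategoryTheory
open scoped FundamentalGroupoid ENNReal Manifold

universe u

noncomputable section

/-- The length of a path in a pseudo-emetric space, as the total variation of the
parametrization. -/
def pathLength {X : Type u} [PseudoEMetricSpace X] {x y : X} (γ : Path x y) : ℝ≥0∞ :=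
  eVariationOn γ Set.univ

/-- A (pseudo-e)metric space is a *length space* if the distance between any two points is
the infimum of the lengths of paths joining them. -/
def IsLengthSpace (X : Type u) [PseudoEMetricSpace X] : Prop :=
  ∀ x y : X, edist x y = ⨅ γ : Path x y, pathLength γ

/-- Two loops are homotopic (rel endpoints) *within* the set `S` if there is a path homotopy
between them whose image is contained in `S`. -/
def HomotopicIn {X : Type u} [TopologicalSpace X] {x y : X} (γ₁ γ₂ : Path x y) (S : Set X) :
    Prop :=
  ∃ H : Path.Homotopy γ₁ γ₂, ∀ z : I × I, H z ∈ S

/-- A loop is nullhomotopic within the set `S`. -/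
def NullHomotopicIn {X : Type u} [TopologicalSpace X] {x : X} (γ : Path x x) (S : Set X) :
    Prop :=
  HomotopicIn γ (Path.refl x) S

/-- The homomorphism on fundamental groups induced by a continuous map. -/
def indHom {X Y : Type u} [TopologicalSpace X] [TopologicalSpace Y]
    (f : C(X, Y)) (x : X) : FundamentalGroup X x →* FundamentalGroup Y (f x) :=
  Functor.mapEnd (FundamentalGroupoid.mk x)
    (πₘ (TopCat.ofHom f : TopCat.of X ⟶ TopCat.of Y))

/-- The class of a loop in the fundamental group. -/
def pathClass {X : Type u} [TopologicalSpace X] {x : X} (γ : Path x x) :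
    FundamentalGroup X x :=
  @FundamentalGroup.fromPath (TopCat.of X) _ x ⟦γ⟧

/-- The basepoint `p` as a point of the closed ball `B̄_p(r)`. -/
def pcb {X : Type u} [MetricSpace X] (p : X) {r : ℝ} (h0 : 0 ≤ r) : closedBall p r :=
  ⟨p, mem_closedBall_self h0⟩

/-- The basepoint `p` as a point of the open ball `B_p(R)`. -/
def ctr {X : Type u} [MetricSpace X] (p : X) {R : ℝ} (hR : 0 < R) : ball p R :=
  ⟨p, mem_ball_self hR⟩

/-- The inclusion of the closed ball `B̄_p(r)` into the open ball `B_p(R)`, `r < R`. -/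
def cbInclusion {X : Type u} [MetricSpace X] (p : X) {r R : ℝ} (h : r < R) :
    C(closedBall p r, ball p R) :=
  ⟨fun z => ⟨z.1, mem_ball.mpr (lt_of_le_of_lt (mem_closedBall.mp z.2) h)⟩,
    Continuous.subtype_mk continuous_subtype_val _⟩

/-- The geometric semi-local fundamental group `G(p,r,R)`: the image of
`π₁(B̄_p(r), p) → π₁(B_p(R), p)`, as a subgroup of `π₁(B_p(R), p)`. -/
def G {X : Type u} [MetricSpace X] (p : X) {r R : ℝ} (h0 : 0 ≤ r) (hrR : r < R) :
    Subgroup (FundamentalGroup (ball p R) (ctr p (h0.trans_lt hrR))) :=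
  (indHom (cbInclusion p hrR) (pcb p h0)).range

/-- The homomorphism `π₁(B_p(R), p) → π₁(X, p)` induced by inclusion. -/
def toAmb {X : Type u} [MetricSpace X] (p : X) {R : ℝ} (hR : 0 < R) :
    FundamentalGroup (ball p R) (ctr p hR) →* FundamentalGroup X p :=
  indHom ⟨Subtype.val, continuous_subtype_val⟩ (ctr p hR)

/-- The homomorphism `π₁(B̄_p(r), p) → π₁(X, p)` induced by inclusion. -/
def cbToAmb {X : Type u} [MetricSpace X] (p : X) {r : ℝ} (h0 : 0 ≤ r) :
    FundamentalGroup (closedBall p r) (pcb p h0) →* FundamentalGroup X p :=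
  indHom ⟨Subtype.val, continuous_subtype_val⟩ (pcb p h0)

end
/-- A `δ`-loop based at `p`: a loop of the form `α * β * α⁻¹` where `β` is a closed path lying
in some ball of radius `δ` and `α` is a path from `p` to `β 0`. -/
def IsDeltaLoop {X : Type u} [MetricSpace X] {p : X} (δ : ℝ) (γ : Path p p) : Prop :=
  ∃ (z c : X) (α : Path p z) (β : Path z z),
    (∀ t, β t ∈ ball c δ) ∧ γ = (α.trans β).trans α.symm

/-- The concatenation of a finite list of loops based at `p`. -/
noncomputable def loopProd {X : Type u} [TopologicalSpace X] {p : X} (l : List (Path p p)) : Path p p :=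
  l.foldr Path.trans (Path.refl p)

/-- Triviality of the relative `δ`-group `G(x, r, R, δ)`: every loop based at `x` with image in
the closed ball `B̄_x(r)` is homotopic, within the open ball `B_x(R)`, to a finite product of
`δ`-loops. -/
def DeltaTrivial {X : Type u} [MetricSpace X] (x : X) (r R δ : ℝ) : Prop :=
  ∀ γ : Path x x, (∀ t, γ t ∈ closedBall x r) →
    ∃ l : List (Path x x), (∀ γ' ∈ l, IsDeltaLoop δ γ') ∧
      HomotopicIn γ (loopProd l) (ball x R)


/-- Type synonym for `X` equipped with the rescaled metric `dist / α`. -/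
def Rescale (_α : ℝ) (X : Type u) : Type u := X

/-- The identity map into the rescaled space. -/
def Rescale.mk (α : ℝ) {X : Type u} (x : X) : Rescale α X := x

/-- The metric space `(X, d_X / α)` for `α > 0`. -/
noncomputable def rescaleMetricSpace (X : Type u) [MetricSpace X] {α : ℝ} (hα : 0 < α) :
    MetricSpace (Rescale α X) where
  dist x y := dist (show X from x) (show X from y) / α
  dist_self x := by
    exact (congrArg (· / α) (dist_self (show X from x))).trans (zero_div α)
  dist_comm x y := by
    exact congrArg (· / α) (dist_comm (show X from x) (show X from y))
  dist_triangle x y z := by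
    dsimp only
    rw [← add_div]
    gcongr
    exact dist_triangle _ _ _
  eq_of_dist_eq_zero := by
    intro x y h
    dsimp only at h
    rcases div_eq_zero_iff.mp h with h' | h'
    · have : (show X from x) = (show X from y) := eq_of_dist_eq_zero h'
      exact this
    · exact absurd h' (ne_of_gt hα)

/-! ### Auxiliary lemmas -/

attribute [local instance] Path.Homotopic.setoid

noncomputable section Aux

lemma exists_pathClass_eq {X : Type u} [TopologicalSpace X] {x : X}
    (g : FundamentalGroup X x) : ∃ γ : Path x x, pathClass γ = g := by
  obtain ⟨γ, hγ⟩ := Quotient.exists_rep (@FundamentalGroup.toPath (TopCat.of X) _ x g)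
  exact ⟨γ, hγ⟩

lemma pathClass_eq_iff {X : Type u} [TopologicalSpace X] {x : X} (γ₁ γ₂ : Path x x) :
    pathClass γ₁ = pathClass γ₂ ↔ Path.Homotopic γ₁ γ₂ := by
  constructor
  · intro h
    have := congrArg (@FundamentalGroup.toPath (TopCat.of X) _ x) h
    exact Quotient.exact (s := Path.Homotopic.setoid x x) this
  · intro h
    exact Quotient.sound (s := Path.Homotopic.setoid x x) h

lemma indHom_pathClass {X Y : Type u} [TopologicalSpace X] [TopologicalSpace Y]
    (f : C(X, Y)) (x : X) (γ : Path x x) :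
    indHom f x (pathClass γ) = pathClass (γ.map f.continuous) := by
  rfl

lemma toAmb_pathClass {X : Type u} [MetricSpace X] (p : X) {R : ℝ} (hR : 0 < R)
    (γ : Path (ctr p hR) (ctr p hR)) :
    toAmb p hR (pathClass γ) = pathClass (γ.map continuous_subtype_val) :=
  indHom_pathClass _ _ γ

/-- Corestriction of a loop to a subset containing its image. -/
def corestrict {Y : Type u} [TopologicalSpace Y] {x : Y} (γ : Path x x) {S : Set Y}
    (h : ∀ t, γ t ∈ S) (hx : x ∈ S) : Path (⟨x, hx⟩ : S) (⟨x, hx⟩ : S) where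
  toFun t := ⟨γ t, h t⟩
  continuous_toFun := γ.continuous.subtype_mk h
  source' := Subtype.ext γ.source'
  target' := Subtype.ext γ.target'

lemma rescale_dist_eq {X : Type u} [MetricSpace X] {α : ℝ} (hα : 0 < α) (a b : Rescale α X) :
    @dist _ (rescaleMetricSpace X hα).toDist a b = dist (show X from a) (show X from b) / α :=
  rfl

lemma rescale_continuous_mk {X : Type u} [MetricSpace X] {α : ℝ} (hα : 0 < α) :
    @Continuous X (Rescale α X) _
      (rescaleMetricSpace X hα).toUniformSpace.toTopologicalSpace (Rescale.mk α) := by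
  letI := rescaleMetricSpace X hα
  rw [Metric.continuous_iff]
  intro b ε hε
  refine ⟨ε * α, by positivity, fun a ha => ?_⟩
  show dist a b / α < ε
  rw [div_lt_iff₀ hα]
  exact ha

lemma rescale_continuous_val {X : Type u} [MetricSpace X] {α : ℝ} (hα : 0 < α) :
    @Continuous (Rescale α X) X
      (rescaleMetricSpace X hα).toUniformSpace.toTopologicalSpace _
      (fun y => show X from y) := by
  letI := rescaleMetricSpace X hα
  rw [Metric.continuous_iff]
  intro b ε hε
  refine ⟨ε / α, by positivity, fun a ha => ?_⟩
  have : dist (show X from a) (show X from b) / α < ε / α := ha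
  calc dist (show X from a) (show X from b)
      = dist (show X from a) (show X from b) / α * α := by field_simp
    _ < ε / α * α := by gcongr
    _ = ε := by field_simp

lemma rescale_mem_ball {X : Type u} [MetricSpace X] {α : ℝ} (hα : 0 < α) {y z : X} {ε : ℝ} :
    (Rescale.mk α y) ∈ @Metric.ball (Rescale α X)
      (rescaleMetricSpace X hα).toPseudoMetricSpace (Rescale.mk α z) ε ↔ dist y z < ε * α := by
  letI := rescaleMetricSpace X hα
  rw [Metric.mem_ball]
  show dist y z / α < ε ↔ _
  rw [div_lt_iff₀ hα]

lemma rescale_mem_closedBall {X : Type u} [MetricSpace X] {α : ℝ} (hα : 0 < α) {y z : X}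
    {ε : ℝ} :
    (Rescale.mk α y) ∈ @Metric.closedBall (Rescale α X)
      (rescaleMetricSpace X hα).toPseudoMetricSpace (Rescale.mk α z) ε ↔ dist y z ≤ ε * α := by
  letI := rescaleMetricSpace X hα
  rw [Metric.mem_closedBall]
  show dist y z / α ≤ ε ↔ _
  rw [div_le_iff₀ hα]

/-- Key homotopy-transfer lemma: if the corestrictions of two loops to `S` are homotopic
(inside `S`), then the first loop is homotopic within `S` to the conjugated version
`refl * σ * refl⁻¹ * refl` of the second. -/
lemma key_homotopicIn {Y : Type u} [TopologicalSpace Y] {c : Y} {S : Set Y} (hc : c ∈ S)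
    (γ sg : Path c c) (hγ : ∀ t, γ t ∈ S) (hσ : ∀ t, sg t ∈ S)
    (h : Path.Homotopic (corestrict γ hγ hc) (corestrict sg hσ hc)) :
    HomotopicIn γ ((((Path.refl c).trans sg).trans (Path.refl c).symm).trans (Path.refl c)) S := by
  set c' : S := (⟨c, hc⟩ : S) with hc'
  have h2 : Path.Homotopic (corestrict sg hσ hc)
      ((((Path.refl c').trans (corestrict sg hσ hc)).trans
        (Path.refl c').symm).trans (Path.refl c')) := by
    rw [Path.refl_symm]
    exact (Path.Homotopic.trans ⟨Path.Homotopy.transRefl _⟩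
      (Path.Homotopic.trans ⟨Path.Homotopy.transRefl _⟩
        ⟨Path.Homotopy.reflTrans _⟩)).symm
  obtain ⟨F⟩ := Path.Homotopic.trans h h2
  have hrm : (Path.refl c').map continuous_subtype_val = Path.refl c :=
    Path.ext (funext fun t => rfl)
  have hsm : (corestrict sg hσ hc).map continuous_subtype_val = sg :=
    Path.ext (funext fun t => rfl)
  have hgm : (corestrict γ hγ hc).map continuous_subtype_val = γ :=
    Path.ext (funext fun t => rfl)
  refine ⟨Path.Homotopy.cast
    (F.map (⟨Subtype.val, continuous_subtype_val⟩ : C(S, Y))) ?_ ?_, fun z => ?_⟩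
  · exact hgm
  · simp only [Path.refl_symm, Path.map_trans, hrm, hsm]
  · exact (F z).2

end Aux

set_option maxHeartbeats 4000000 in
theorem stmt9 {X : Type u} [MetricSpace X] [CompleteSpace X] (hlen : IsLengthSpace X)
    (x : X) (k L : ℝ) (hk : 1 < k) (hL : 0 < L)
    (hiso : ∀ r, ∀ hr : L < r,
      Function.Bijective
        ((toAmb x ((hL.trans hr).trans (by nlinarith : r < k * r))).comp
          (G x (hL.trans hr).le (by nlinarith : r < k * r)).subtype)) :
    ∀ r', 0 < r' → ∀ δ, 0 < δ → ∃ A > 0, ∀ α, A ≤ α → ∀ hα : 0 < α,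
      letI := rescaleMetricSpace X hα
      DeltaTrivial (X := Rescale α X) (Rescale.mk α x) r' ((k + 1) * r') δ := by
  intro r' hr' δ hδ
  refine ⟨max ((2*L+1)/r') ((2*L+1)/δ), lt_max_of_lt_left (by positivity), ?_⟩
  intro α hA hα
  letI inst := rescaleMetricSpace X hα
  intro γ hγ
  have h1 : 2*L+1 ≤ α * r' := by
    have := le_trans (le_max_left ((2*L+1)/r') ((2*L+1)/δ)) hA
    rwa [div_le_iff₀ hr'] at this
  have h2 : 2*L+1 ≤ α * δ := by
    have := le_trans (le_max_right ((2*L+1)/r') ((2*L+1)/δ)) hA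
    rwa [div_le_iff₀ hδ] at this
  set ρ := α * r' with hρdef
  have hρpos : 0 < ρ := by positivity
  have hρ0 : (0:ℝ) ≤ ρ := hρpos.le
  have hLρ : L < ρ := by linarith
  have hρk : ρ < k * ρ := by nlinarith
  have h0kρ : 0 < k * ρ := by nlinarith
  have h2L0 : (0:ℝ) ≤ 2*L := by linarith
  have hL2L : L < 2*L := by linarith
  have h2Lk : 2*L < k*(2*L) := by nlinarith
  have h0k2L : (0:ℝ) < k*(2*L) := by nlinarith
  have hkpos : (0:ℝ) < k := by linarith
  -- the loop viewed in `X`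
  set γX : Path x x := γ.map (rescale_continuous_val hα) with hγXdef
  have hγX : ∀ t, γX t ∈ closedBall x ρ := by
    intro t
    have hd : dist (show X from γ t) x ≤ r' * α := (rescale_mem_closedBall hα).mp (hγ t)
    rw [mem_closedBall]
    show dist (show X from γ t) x ≤ ρ
    rw [hρdef, mul_comm]
    exact hd
  -- surjectivity at radius 2L : find a small representative loop
  obtain ⟨g', hg'⟩ := (hiso (2*L) hL2L).2 (pathClass γX)
  obtain ⟨h0, hh0⟩ := MonoidHom.mem_range.mp g'.2
  obtain ⟨sg', hsg'⟩ := exists_pathClass_eq h0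
  set sg : Path x x := sg'.map continuous_subtype_val with hsgdef
  have hsgmem : ∀ t : I, sg t ∈ closedBall x (2*L) := fun t => (sg' t).2
  have hg'1 : toAmb x h0k2L g'.1 = pathClass γX := hg'
  have hh0' : indHom (cbInclusion x h2Lk) (pcb x h2L0) h0 = g'.1 := hh0
  have hstep : toAmb x h0k2L (indHom (cbInclusion x h2Lk) (pcb x h2L0) (pathClass sg'))
      = pathClass γX := by
    rw [hsg', hh0']; exact hg'1
  have col0 : ((sg'.map (cbInclusion x h2Lk).continuous).map continuous_subtype_val
      : Path x x) = sg := Path.ext (funext fun t => rfl)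
  have hclass : pathClass sg = pathClass γX :=
    (congrArg pathClass col0).symm.trans
      ((toAmb_pathClass x h0k2L (sg'.map (cbInclusion x h2Lk).continuous)).symm.trans
        ((congrArg (toAmb x h0k2L)
          (indHom_pathClass (cbInclusion x h2Lk) (pcb x h2L0) sg')).symm.trans hstep))
  -- injectivity at radius ρ
  have hsgρmem : ∀ t : I, sg t ∈ closedBall x ρ := fun t =>
    mem_closedBall.mpr (le_trans (mem_closedBall.mp (hsgmem t)) (by linarith))
  set γρ := corestrict γX hγX (mem_closedBall_self hρ0) with hγρdef
  set sgρ := corestrict sg hsgρmem (mem_closedBall_self hρ0) with hsgρdef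
  have m₁ : indHom (cbInclusion x hρk) (pcb x hρ0) (pathClass γρ) ∈ G x hρ0 hρk :=
    MonoidHom.mem_range.mpr ⟨pathClass γρ, rfl⟩
  have m₂ : indHom (cbInclusion x hρk) (pcb x hρ0) (pathClass sgρ) ∈ G x hρ0 hρk :=
    MonoidHom.mem_range.mpr ⟨pathClass sgρ, rfl⟩
  have col1 : ((γρ.map (cbInclusion x hρk).continuous).map continuous_subtype_val
      : Path x x) = γX := Path.ext (funext fun t => rfl)
  have col2 : ((sgρ.map (cbInclusion x hρk).continuous).map continuous_subtype_val
      : Path x x) = sg := Path.ext (funext fun t => rfl)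
  have hφ₁ : toAmb x h0kρ (indHom (cbInclusion x hρk) (pcb x hρ0) (pathClass γρ))
      = pathClass γX :=
    (congrArg (toAmb x h0kρ) (indHom_pathClass (cbInclusion x hρk) (pcb x hρ0) γρ)).trans
      ((toAmb_pathClass x h0kρ (γρ.map (cbInclusion x hρk).continuous)).trans
        (congrArg pathClass col1))
  have hφ₂ : toAmb x h0kρ (indHom (cbInclusion x hρk) (pcb x hρ0) (pathClass sgρ))
      = pathClass γX :=
    (congrArg (toAmb x h0kρ) (indHom_pathClass (cbInclusion x hρk) (pcb x hρ0) sgρ)).trans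
      ((toAmb_pathClass x h0kρ (sgρ.map (cbInclusion x hρk).continuous)).trans
        ((congrArg pathClass col2).trans hclass))
  have h12 : (⟨indHom (cbInclusion x hρk) (pcb x hρ0) (pathClass γρ), m₁⟩ : G x hρ0 hρk)
      = ⟨indHom (cbInclusion x hρk) (pcb x hρ0) (pathClass sgρ), m₂⟩ := by
    apply (hiso ρ hLρ).1
    show toAmb x h0kρ (indHom (cbInclusion x hρk) (pcb x hρ0) (pathClass γρ))
      = toAmb x h0kρ (indHom (cbInclusion x hρk) (pcb x hρ0) (pathClass sgρ))
    exact hφ₁.trans hφ₂.symm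
  have ha : indHom (cbInclusion x hρk) (pcb x hρ0) (pathClass γρ)
      = indHom (cbInclusion x hρk) (pcb x hρ0) (pathClass sgρ) := congrArg Subtype.val h12
  have hhom : Path.Homotopic (γρ.map (cbInclusion x hρk).continuous)
      (sgρ.map (cbInclusion x hρk).continuous) := by
    refine (pathClass_eq_iff _ _).mp ?_
    exact (indHom_pathClass (cbInclusion x hρk) (pcb x hρ0) γρ).symm.trans
      (ha.trans (indHom_pathClass (cbInclusion x hρk) (pcb x hρ0) sgρ))
  -- transfer everything to the rescaled space
  have hballS : ∀ z : ↥(ball x (k*ρ)), Rescale.mk α z.1 ∈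
      @Metric.ball (Rescale α X) (rescaleMetricSpace X hα).toPseudoMetricSpace
        (Rescale.mk α x) ((k+1)*r') := by
    intro z
    refine (rescale_mem_ball hα).mpr ?_
    have hz := mem_ball.mp z.2
    have hzz : dist (z.1 : X) x < k * (α * r') := by
      rw [← hρdef]; exact hz
    nlinarith [hzz, mul_pos hα hr']
  set j : C(↥(ball x (k*ρ)),
      ↥(@Metric.ball (Rescale α X) (rescaleMetricSpace X hα).toPseudoMetricSpace
        (Rescale.mk α x) ((k+1)*r'))) :=
    ⟨fun z => ⟨Rescale.mk α z.1, hballS z⟩,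
      Continuous.subtype_mk ((rescale_continuous_mk hα).comp continuous_subtype_val) _⟩
    with hj
  set iR : C(↥(ball x (k*ρ)), Rescale α X) :=
    ⟨fun z => Rescale.mk α z.1, (rescale_continuous_mk hα).comp continuous_subtype_val⟩
    with hiR
  set sgR : Path (Rescale.mk α x) (Rescale.mk α x) :=
    ((sgρ.map (cbInclusion x hρk).continuous).map iR.continuous : Path _ _) with hsgRdef
  have hγS : ∀ t, γ t ∈ @Metric.ball (Rescale α X)
      (rescaleMetricSpace X hα).toPseudoMetricSpace (Rescale.mk α x) ((k+1)*r') := by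
    intro t
    refine (rescale_mem_ball hα).mpr ?_
    have hd : dist (show X from γ t) x ≤ r' * α := (rescale_mem_closedBall hα).mp (hγ t)
    show dist (show X from γ t) x < (k+1)*r'*α
    nlinarith [mul_pos (mul_pos hkpos hr') hα]
  have hsgS : ∀ t, sgR t ∈ @Metric.ball (Rescale α X)
      (rescaleMetricSpace X hα).toPseudoMetricSpace (Rescale.mk α x) ((k+1)*r') :=
    fun t => hballS ((sgρ.map (cbInclusion x hρk).continuous) t)
  have hcS : Rescale.mk α x ∈ @Metric.ball (Rescale α X)
      (rescaleMetricSpace X hα).toPseudoMetricSpace (Rescale.mk α x) ((k+1)*r') := by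
    refine (rescale_mem_ball hα).mpr ?_
    rw [dist_self]
    positivity
  have hcor : Path.Homotopic (corestrict γ hγS hcS) (corestrict sgR hsgS hcS) := by
    obtain ⟨F⟩ := hhom
    exact ⟨(F.map j).cast (Path.ext (funext fun t => rfl)) (Path.ext (funext fun t => rfl))⟩
  have final := key_homotopicIn hcS γ sgR hγS hsgS hcor
  refine ⟨[((Path.refl (Rescale.mk α x)).trans sgR).trans (Path.refl (Rescale.mk α x)).symm],
    fun γ' hγ' => ?_, ?_⟩
  · rw [List.mem_singleton] at hγ'
    subst hγ'
    refine ⟨Rescale.mk α x, Rescale.mk α x, Path.refl _, sgR, fun t => ?_, rfl⟩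
    refine (rescale_mem_ball hα).mpr ?_
    show dist (sg t) x < δ * α
    have h3 : dist (sg t) x ≤ 2*L := mem_closedBall.mp (hsgmem t)
    have h4 : α * δ = δ * α := mul_comm α δ
    linarith
  · exact final
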